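/- For p ∈ [1/2, 1), the generating function S(z,v) = -zv(1 + (v-1)(p-1)z) / (zv - 1 + p v (v-1)(p-1) z^2) satisfies: the coefficient of z^n in ∂_v S(z,v)|_{v=1} equals (1-p+p^2)n + 3p - 1 - 2p^2 for n ≥ 3. -/

import Mathlib

open PowerSeries

/-- `z` as a power series over polynomials in `v`. -/
noncomputable def Zp : PowerSeries (Polynomial ℝ) := PowerSeries.X

/-- `v` as a power series over polynomials in `v`. -/
noncomputable def Vp : PowerSeries (Polynomial ℝ) := PowerSeries.C Polynomial.X

/-- A real constant as a power series over polynomials in `v`. -/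
noncomputable def Cp (a : ℝ) : PowerSeries (Polynomial ℝ) := PowerSeries.C (Polynomial.C a)

/-- For `p ∈ [1/2, 1)`, the generating function
`S(z,v) = -zv(1 + (v-1)(p-1)z)/(zv - 1 + pv(v-1)(p-1)z²)` (characterized by clearing
the denominator, whose constant term `-1` is invertible) satisfies: the coefficient of
`zⁿ` in `∂_v S(z,v)|_{v=1}` equals `(1-p+p²)n + 3p - 1 - 2p²` for `n ≥ 3`. -/
theorem asymmetric_shelf_gf_expectation (p : ℝ) (hp : 1 / 2 ≤ p) (hp1 : p < 1)
    (S : PowerSeries (Polynomial ℝ))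
    (hS : S * (Zp * Vp - 1 + Cp p * Vp * (Vp - 1) * Cp (p - 1) * Zp ^ 2)
        = -(Zp * (1 + (Vp - 1) * Cp (p - 1) * Zp)) * Vp) :
    ∀ n : ℕ, 3 ≤ n →
      Polynomial.eval 1 (Polynomial.derivative (PowerSeries.coeff n S))
        = (1 - p + p ^ 2) * n + 3 * p - 1 - 2 * p ^ 2 := by
  classical
  set v : Polynomial ℝ := Polynomial.X with hv
  set w : Polynomial ℝ := Polynomial.C p * Polynomial.X * (Polynomial.X - 1) * Polynomial.C (p - 1) with hw
  set u : Polynomial ℝ := (Polynomial.X - 1) * Polynomial.C (p - 1) * Polynomial.X with hu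
  have hwC : PowerSeries.C w = Cp p * Vp * (Vp - 1) * Cp (p - 1) := by
    simp [hw, Cp, Vp, map_mul, map_sub, map_one]
  have huC : PowerSeries.C u = (Vp - 1) * Cp (p - 1) * Vp := by
    simp [hu, Cp, Vp, map_mul, map_sub, map_one]
  have hS' : S * PowerSeries.C v * PowerSeries.X ^ 1
      + S * PowerSeries.C w * PowerSeries.X ^ 2 - S
      = -(PowerSeries.C v * PowerSeries.X ^ 1) - PowerSeries.C u * PowerSeries.X ^ 2 := by
    rw [hwC, huC]
    simp only [Zp, Vp, Cp] at hS ⊢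
    linear_combination hS
  have h0 : PowerSeries.constantCoeff S = 0 := by
    have h := congrArg (PowerSeries.coeff 0) hS'
    simpa [PowerSeries.coeff_mul_X_pow', PowerSeries.coeff_C,
      PowerSeries.coeff_zero_eq_constantCoeff] using h
  have h1 : (PowerSeries.coeff 1) S = v := by
    have h := congrArg (PowerSeries.coeff 1) hS'
    simp only [map_add, map_sub, map_neg, PowerSeries.coeff_mul_X_pow',
      PowerSeries.coeff_C, PowerSeries.coeff_mul_C] at h
    norm_num at h
    rw [h0] at h
    linear_combination -h
  have h2 : (PowerSeries.coeff 2) S = v * v + u := by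
    have h := congrArg (PowerSeries.coeff 2) hS'
    simp only [map_add, map_sub, map_neg, PowerSeries.coeff_mul_X_pow',
      PowerSeries.coeff_C, PowerSeries.coeff_mul_C] at h
    norm_num at h
    rw [h0, h1] at h
    linear_combination -h
  have hrec : ∀ n : ℕ, (PowerSeries.coeff (n + 3)) S
      = (PowerSeries.coeff (n + 2)) S * v + (PowerSeries.coeff (n + 1)) S * w := by
    intro n
    have h := congrArg (PowerSeries.coeff (n + 3)) hS'
    simp only [map_add, map_sub, map_neg, PowerSeries.coeff_mul_X_pow',
      PowerSeries.coeff_C, PowerSeries.coeff_mul_C] at h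
    have e1 : (1:ℕ) ≤ n + 3 := by omega
    have e2 : (2:ℕ) ≤ n + 3 := by omega
    have e3 : n + 3 - 1 = n + 2 := by omega
    have e4 : n + 3 - 2 = n + 1 := by omega
    have e5 : n + 3 ≠ 0 := by omega
    have e6 : n + 2 ≠ 0 := by omega
    have e7 : n + 1 ≠ 0 := by omega
    simp only [if_pos e1, if_pos e2, e3, e4, if_neg e5, if_neg e6, if_neg e7] at h
    linear_combination -h
  -- evaluation lemmas
  have ev_v : Polynomial.eval (1:ℝ) v = 1 := by simp [hv]
  have edv : Polynomial.eval (1:ℝ) (Polynomial.derivative v) = 1 := by simp [hv]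
  have ev_w : Polynomial.eval (1:ℝ) w = 0 := by simp [hw]
  have edw : Polynomial.eval (1:ℝ) (Polynomial.derivative w) = p * (p - 1) := by
    simp [hw, Polynomial.derivative_mul]
  have ev_u : Polynomial.eval (1:ℝ) u = 0 := by simp [hu]
  have edu : Polynomial.eval (1:ℝ) (Polynomial.derivative u) = p - 1 := by
    simp [hu, Polynomial.derivative_mul]
  have hev : ∀ n : ℕ, Polynomial.eval 1 ((PowerSeries.coeff (n + 1)) S) = 1
      ∧ Polynomial.eval 1 ((PowerSeries.coeff (n + 2)) S) = 1 := by
    intro n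
    induction n with
    | zero => exact ⟨by rw [h1, ev_v], by rw [h2]; simp [Polynomial.eval_add, Polynomial.eval_mul, ev_v, ev_u]⟩
    | succ k ih =>
      refine ⟨ih.2, ?_⟩
      rw [show k + 1 + 2 = k + 3 from rfl, hrec k]
      simp [Polynomial.eval_add, Polynomial.eval_mul, ev_v, ev_w, ih.1, ih.2]
  have hf : ∀ n : ℕ, Polynomial.eval 1 (Polynomial.derivative ((PowerSeries.coeff (n + 3)) S))
      = Polynomial.eval 1 (Polynomial.derivative ((PowerSeries.coeff (n + 2)) S)) + (1 - p + p ^ 2) := by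
    intro n
    rw [hrec n, Polynomial.derivative_add, Polynomial.derivative_mul, Polynomial.derivative_mul]
    simp only [Polynomial.eval_add, Polynomial.eval_mul]
    rw [ev_v, edv, ev_w, edw, (hev (n + 1)).1, (hev n).1]
    ring
  have f2 : Polynomial.eval 1 (Polynomial.derivative ((PowerSeries.coeff 2) S)) = p + 1 := by
    rw [h2, Polynomial.derivative_add, Polynomial.derivative_mul]
    simp only [Polynomial.eval_add, Polynomial.eval_mul]
    rw [ev_v, edv, edu]
    ring
  intro n hn
  obtain ⟨m, rfl⟩ : ∃ m, n = m + 3 := ⟨n - 3, by omega⟩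
  induction m with
  | zero =>
    rw [show (0:ℕ) + 3 = 3 from rfl, show (3:ℕ) = 0 + 3 from rfl, hf 0, f2]
    push_cast
    ring
  | succ k ih =>
    rw [show k + 1 + 3 = (k + 1) + 3 from rfl, hf (k + 1),
      show (k + 1) + 2 = k + 3 from rfl, ih (by omega)]
    push_cast
    ring
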